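/- Let S be a ring with an approximate unit. If P is a non-degenerate left S-module which is projective in the category of non-degenerate left S-modules, then P is flat, in the sense that the functor − ⊗_S P from non-degenerate right S-modules to abelian groups is exact. -/

import Mathlib

open scoped TensorProduct

/-- The additive subgroup of `N ⊗_ℤ P` generated by the balancing relations
`(x · s) ⊗ p - x ⊗ (s • p)`, where the right `S`-module structure on `N` is given by `ρ`;
the quotient is the balanced tensor product `N ⊗_S P`. -/
noncomputable def balancedRelR (S : Type*) [NonUnitalRing S]
    (N : Type) [AddCommGroup N] (ρ : N → S → N)
    (P : Type) [AddCommGroup P] [SMul S P] : AddSubgroup (TensorProduct ℤ N P) :=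
  AddSubgroup.closure {a | ∃ (x : N) (s : S) (p : P), a = (ρ x s) ⊗ₜ[ℤ] p - x ⊗ₜ[ℤ] (s • p)}

/-- Let `S` be a (possibly non-unital) ring with an approximate unit, and let `P` be a
non-degenerate left `S`-module which is projective in the category of non-degenerate left
`S`-modules (i.e. an `S`-linear direct summand of a direct sum of copies of the left regular
representation `S`).  Then `P` is flat: the functor `- ⊗_S P` from non-degenerate right
`S`-modules to abelian groups is exact, i.e. it preserves injectivity (being automatically
right exact).  Concretely: for every injective map `f : N → N'` of non-degenerate right
`S`-modules, the induced map `N ⊗_S P → N' ⊗_S P` is injective. -/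
theorem stmt1 (S : Type*) [NonUnitalRing S]
    {I : Type*} [Preorder I] [IsDirected I (· ≤ ·)] (e : I → S)
    (he_idem : ∀ i, e i * e i = e i)
    (he_unit : ∀ s : S, ∃ i, e i * s = s ∧ s * e i = s)
    (he_mono : ∀ i j : I, i ≤ j → e j * e i = e i ∧ e i * e j = e i)
    -- `P` is a non-degenerate left `S`-module:
    (P : Type) [AddCommGroup P] [SMul S P]
    (hsmul_add : ∀ (s : S) (p q : P), s • (p + q) = s • p + s • q)
    (hadd_smul : ∀ (s t : S) (p : P), (s + t) • p = s • p + t • p)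
    (hmul_smul : ∀ (s t : S) (p : P), (s * t) • p = s • (t • p))
    (hPnondeg : ∀ p : P, ∃ i, e i • p = p)
    -- `P` is projective: an `S`-linear direct summand of a direct sum `⊕_ι S`:
    (hproj : ∃ (ι : Type) (σ : P →+ (ι →₀ S)) (π : (ι →₀ S) →+ P),
      (∀ (s : S) (p : P), σ (s • p) = s • σ p) ∧
      (∀ (s : S) (v : ι →₀ S), π (s • v) = s • π v) ∧
      (∀ p : P, π (σ p) = p))
    -- `N` and `N'` are non-degenerate right `S`-modules, with actions `ρ`, `ρ'`:
    (N N' : Type) [AddCommGroup N] [AddCommGroup N']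
    (ρ : N → S → N) (ρ' : N' → S → N')
    (hρ_add : ∀ (x y : N) (s : S), ρ (x + y) s = ρ x s + ρ y s)
    (hρ_add' : ∀ (x : N) (s t : S), ρ x (s + t) = ρ x s + ρ x t)
    (hρ_mul : ∀ (x : N) (s t : S), ρ x (s * t) = ρ (ρ x s) t)
    (hNnondeg : ∀ x : N, ∃ i, ρ x (e i) = x)
    (hρ'_add : ∀ (x y : N') (s : S), ρ' (x + y) s = ρ' x s + ρ' y s)
    (hρ'_add' : ∀ (x : N') (s t : S), ρ' x (s + t) = ρ' x s + ρ' x t)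
    (hρ'_mul : ∀ (x : N') (s t : S), ρ' x (s * t) = ρ' (ρ' x s) t)
    (hN'nondeg : ∀ x : N', ∃ i, ρ' x (e i) = x)
    -- `f : N → N'` is an injective map of right `S`-modules:
    (f : N →+ N') (hf : Function.Injective f)
    (hfρ : ∀ (x : N) (s : S), f (ρ x s) = ρ' (f x) s)
    -- `Φ` is the induced map `N ⊗_S P → N' ⊗_S P`:
    (Φ : (TensorProduct ℤ N P ⧸ balancedRelR S N ρ P) →+
      (TensorProduct ℤ N' P ⧸ balancedRelR S N' ρ' P))
    (hΦ : ∀ (x : N) (p : P), Φ (QuotientAddGroup.mk (x ⊗ₜ[ℤ] p)) =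
      QuotientAddGroup.mk ((f x) ⊗ₜ[ℤ] p)) :
    Function.Injective Φ := by
  classical
  obtain ⟨ι, σ, π, hσ, hπ, hπσ⟩ := hproj
  have hρ0 : ∀ x : N, ρ x 0 = 0 := by
    intro x
    have h := hρ_add' x 0 0
    rw [add_zero] at h
    exact (left_eq_add.mp h)
  have hρ'0 : ∀ x : N', ρ' x 0 = 0 := by
    intro x
    have h := hρ'_add' x 0 0
    rw [add_zero] at h
    exact (left_eq_add.mp h)
  have hup : ∀ (x : N) (j l : I), j ≤ l → ρ x (e j) = x → ρ x (e l) = x := by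
    intro x j l hjl hx
    calc ρ x (e l) = ρ (ρ x (e j)) (e l) := by rw [hx]
      _ = ρ x (e j * e l) := (hρ_mul x (e j) (e l)).symm
      _ = x := by rw [(he_mono j l hjl).2, hx]
  have hSup : ∀ (s : S) (j l : I), j ≤ l → s * e j = s → s * e l = s := by
    intro s j l hjl hs
    calc s * e l = s * e j * e l := by rw [hs]
      _ = s * (e j * e l) := mul_assoc _ _ _
      _ = s := by rw [(he_mono j l hjl).2, hs]
  have hcommon : ∀ t : Finset S, ∃ j, ∀ s ∈ t, s * e j = s := by
    intro t
    induction t using Finset.induction_on with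
    | empty =>
      obtain ⟨i, -, -⟩ := he_unit 0
      exact ⟨i, by simp⟩
    | @insert a t ha ih =>
      obtain ⟨j, hj⟩ := ih
      obtain ⟨k, -, hk⟩ := he_unit a
      obtain ⟨l, hjl, hkl⟩ := directed_of (· ≤ ·) j k
      refine ⟨l, ?_⟩
      intro s hs
      rcases Finset.mem_insert.mp hs with h | h
      · subst h; exact hSup s k l hkl hk
      · exact hSup s j l hjl (hj s h)
  -- the balancing relation in the quotient
  have hrel : ∀ (x : N) (s : S) (p : P),
      (QuotientAddGroup.mk ((ρ x s) ⊗ₜ[ℤ] p) : TensorProduct ℤ N P ⧸ balancedRelR S N ρ P)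
        = QuotientAddGroup.mk (x ⊗ₜ[ℤ] (s • p)) := by
    intro x s p
    rw [QuotientAddGroup.eq_iff_sub_mem]
    exact AddSubgroup.subset_closure ⟨x, s, p, rfl⟩
  -- the map α : N ⊗ P →+ (ι →₀ N)
  have hfcompat : ∀ {M : Type} [inst : AddCommGroup M] (g : N →+ P →+ M)
      (r : ℤ) (m : N) (n : P), (g (r • m)) n = (g m) (r • n) := by
    intro M _ g r m n
    induction r using Int.induction_on with
    | zero => simp
    | succ k ih => simp [add_smul, ih]
    | pred k ih => simp [sub_smul, ih]
  have hfcompat' : ∀ {M : Type} [inst : AddCommGroup M] (g : N' →+ P →+ M)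
      (r : ℤ) (m : N') (n : P), (g (r • m)) n = (g m) (r • n) := by
    intro M _ g r m n
    induction r using Int.induction_on with
    | zero => simp
    | succ k ih => simp [add_smul, ih]
    | pred k ih => simp [sub_smul, ih]
  obtain ⟨α, hα⟩ : ∃ α : TensorProduct ℤ N P →+ (ι →₀ N),
      ∀ (x : N) (p : P), α (x ⊗ₜ[ℤ] p) = Finsupp.mapRange (ρ x) (hρ0 x) (σ p) := by
    refine ⟨TensorProduct.liftAddHom (AddMonoidHom.mk'
      (fun x => AddMonoidHom.mk' (fun p => Finsupp.mapRange (ρ x) (hρ0 x) (σ p))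
        (by intro p q; ext i; simp [Finsupp.mapRange_apply, hρ_add']))
      (by intro x y; ext p i
          simp [AddMonoidHom.add_apply, Finsupp.mapRange_apply, hρ_add]))
      (hfcompat _), fun x p => ?_⟩
    exact TensorProduct.liftAddHom_tmul _ _ x p
  obtain ⟨α', hα'⟩ : ∃ α' : TensorProduct ℤ N' P →+ (ι →₀ N'),
      ∀ (x : N') (p : P), α' (x ⊗ₜ[ℤ] p) = Finsupp.mapRange (ρ' x) (hρ'0 x) (σ p) := by
    refine ⟨TensorProduct.liftAddHom (AddMonoidHom.mk'
      (fun x => AddMonoidHom.mk' (fun p => Finsupp.mapRange (ρ' x) (hρ'0 x) (σ p))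
        (by intro p q; ext i; simp [Finsupp.mapRange_apply, hρ'_add']))
      (by intro x y; ext p i
          simp [AddMonoidHom.add_apply, Finsupp.mapRange_apply, hρ'_add]))
      (hfcompat' _), fun x p => ?_⟩
    exact TensorProduct.liftAddHom_tmul _ _ x p
  -- α kills the balanced relations
  have hker : ∀ u ∈ balancedRelR S N ρ P, α u = 0 := by
    have hle : balancedRelR S N ρ P ≤ α.ker := by
      unfold balancedRelR
      rw [AddSubgroup.closure_le]
      rintro u ⟨x, s, p, rfl⟩
      simp only [SetLike.mem_coe, AddMonoidHom.mem_ker, map_sub, sub_eq_zero]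
      rw [hα, hα, hσ]
      ext i
      simp [Finsupp.mapRange_apply, Finsupp.smul_apply, smul_eq_mul, hρ_mul]
    exact fun u hu => hle hu
  have hker' : ∀ u ∈ balancedRelR S N' ρ' P, α' u = 0 := by
    have hle : balancedRelR S N' ρ' P ≤ α'.ker := by
      unfold balancedRelR
      rw [AddSubgroup.closure_le]
      rintro u ⟨x, s, p, rfl⟩
      simp only [SetLike.mem_coe, AddMonoidHom.mem_ker, map_sub, sub_eq_zero]
      rw [hα', hα', hσ]
      ext i
      simp [Finsupp.mapRange_apply, Finsupp.smul_apply, smul_eq_mul, hρ'_mul]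
    exact fun u hu => hle hu
  obtain ⟨A, hA⟩ : ∃ A : (TensorProduct ℤ N P ⧸ balancedRelR S N ρ P) →+ (ι →₀ N),
      ∀ u, A (QuotientAddGroup.mk u) = α u :=
    ⟨QuotientAddGroup.lift _ α hker, fun u => rfl⟩
  obtain ⟨A', hA'⟩ : ∃ A' : (TensorProduct ℤ N' P ⧸ balancedRelR S N' ρ' P) →+ (ι →₀ N'),
      ∀ u, A' (QuotientAddGroup.mk u) = α' u :=
    ⟨QuotientAddGroup.lift _ α' hker', fun u => rfl⟩
  -- the section β
  have jvalid : ∀ x : N, ρ x (e (Classical.choose (hNnondeg x))) = x :=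
    fun x => Classical.choose_spec (hNnondeg x)
  have hstep : ∀ (i : ι) (x : N) (j l : I), j ≤ l → ρ x (e j) = x →
      (QuotientAddGroup.mk (x ⊗ₜ[ℤ] π (Finsupp.single i (e l))) :
        TensorProduct ℤ N P ⧸ balancedRelR S N ρ P)
        = QuotientAddGroup.mk (x ⊗ₜ[ℤ] π (Finsupp.single i (e j))) := by
    intro i x j l hjl hx
    conv_lhs => rw [← hx]
    rw [hrel, ← hπ, Finsupp.smul_single, smul_eq_mul, (he_mono j l hjl).2]
  have hindep : ∀ (i : ι) (x : N) (j k : I), ρ x (e j) = x → ρ x (e k) = x →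
      (QuotientAddGroup.mk (x ⊗ₜ[ℤ] π (Finsupp.single i (e j))) :
        TensorProduct ℤ N P ⧸ balancedRelR S N ρ P)
        = QuotientAddGroup.mk (x ⊗ₜ[ℤ] π (Finsupp.single i (e k))) := by
    intro i x j k hj hk
    obtain ⟨l, hjl, hkl⟩ := directed_of (· ≤ ·) j k
    rw [← hstep i x j l hjl hj, hstep i x k l hkl hk]
  have γadd : ∀ (i : ι) (x y : N),
      (QuotientAddGroup.mk ((x + y) ⊗ₜ[ℤ] π (Finsupp.single i
          (e (Classical.choose (hNnondeg (x + y)))))) :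
        TensorProduct ℤ N P ⧸ balancedRelR S N ρ P)
        = QuotientAddGroup.mk (x ⊗ₜ[ℤ] π (Finsupp.single i
            (e (Classical.choose (hNnondeg x)))))
          + QuotientAddGroup.mk (y ⊗ₜ[ℤ] π (Finsupp.single i
            (e (Classical.choose (hNnondeg y))))) := by
    intro i x y
    obtain ⟨l1, h1, h2⟩ := directed_of (· ≤ ·)
      (Classical.choose (hNnondeg x)) (Classical.choose (hNnondeg y))
    obtain ⟨l, hl1, hl2⟩ := directed_of (· ≤ ·) l1 (Classical.choose (hNnondeg (x + y)))
    have hx : ρ x (e l) = x := hup x _ l (h1.trans hl1) (jvalid x)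
    have hy : ρ y (e l) = y := hup y _ l (h2.trans hl1) (jvalid y)
    have hxy : ρ (x + y) (e l) = x + y := hup _ _ l hl2 (jvalid _)
    rw [hindep i (x + y) _ l (jvalid _) hxy, hindep i x _ l (jvalid x) hx,
      hindep i y _ l (jvalid y) hy, TensorProduct.add_tmul]
    rfl
  obtain ⟨β, hβ⟩ : ∃ β : (ι →₀ N) →+ (TensorProduct ℤ N P ⧸ balancedRelR S N ρ P),
      ∀ v : ι →₀ N, β v = v.sum (fun i x => QuotientAddGroup.mk (x ⊗ₜ[ℤ]
        π (Finsupp.single i (e (Classical.choose (hNnondeg x)))))) :=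
    ⟨Finsupp.liftAddHom (fun i => AddMonoidHom.mk' (fun x =>
        QuotientAddGroup.mk (x ⊗ₜ[ℤ] π (Finsupp.single i
          (e (Classical.choose (hNnondeg x)))))) (γadd i)),
      fun v => Finsupp.liftAddHom_apply _ _⟩
  -- β ∘ A = id
  have hβA : ∀ t : TensorProduct ℤ N P ⧸ balancedRelR S N ρ P, β (A t) = t := by
    intro t
    refine QuotientAddGroup.induction_on t ?_
    intro u
    induction u using TensorProduct.induction_on with
    | zero => simp [hA]
    | add u v ihu ihv =>
      rw [show (QuotientAddGroup.mk (u + v) : TensorProduct ℤ N P ⧸ balancedRelR S N ρ P)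
          = QuotientAddGroup.mk u + QuotientAddGroup.mk v from rfl, map_add, map_add, ihu, ihv]
    | tmul x p =>
      rw [hA, hα, hβ]
      obtain ⟨l, hl⟩ := hcommon ((σ p).support.image (σ p))
      have hl' : ∀ i : ι, σ p i * e l = σ p i := by
        intro i
        by_cases h : i ∈ (σ p).support
        · exact hl _ (Finset.mem_image_of_mem _ h)
        · rw [Finsupp.notMem_support_iff.mp h, zero_mul]
      have hterm : ∀ i : ι,
          (QuotientAddGroup.mk ((ρ x (σ p i)) ⊗ₜ[ℤ] π (Finsupp.single i
              (e (Classical.choose (hNnondeg (ρ x (σ p i))))))) :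
            TensorProduct ℤ N P ⧸ balancedRelR S N ρ P)
            = QuotientAddGroup.mk (x ⊗ₜ[ℤ] π (Finsupp.single i (σ p i))) := by
        intro i
        have hvalid : ρ (ρ x (σ p i)) (e l) = ρ x (σ p i) := by
          rw [← hρ_mul, hl' i]
        rw [hindep i _ _ l (jvalid _) hvalid, hrel, ← hπ, Finsupp.smul_single,
          smul_eq_mul, hl' i]
      rw [Finsupp.sum_of_support_subset _ Finsupp.support_mapRange _
        (fun i _ => by simp [TensorProduct.zero_tmul])]
      have hmr : ∀ i : ι, Finsupp.mapRange (ρ x) (hρ0 x) (σ p) i = ρ x (σ p i) :=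
        fun i => Finsupp.mapRange_apply
      calc ∑ i ∈ (σ p).support, (QuotientAddGroup.mk
            ((Finsupp.mapRange (ρ x) (hρ0 x) (σ p) i) ⊗ₜ[ℤ] π (Finsupp.single i
              (e (Classical.choose (hNnondeg (Finsupp.mapRange (ρ x) (hρ0 x) (σ p) i)))))) :
            TensorProduct ℤ N P ⧸ balancedRelR S N ρ P)
          = ∑ i ∈ (σ p).support,
            QuotientAddGroup.mk (x ⊗ₜ[ℤ] π (Finsupp.single i (σ p i))) := by
            refine Finset.sum_congr rfl (fun i _ => ?_)
            rw [show Finsupp.mapRange (ρ x) (hρ0 x) (σ p) i = ρ x (σ p i) from hmr i]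
            exact hterm i
        _ = QuotientAddGroup.mk (x ⊗ₜ[ℤ] p) := by
            let δ : (ι →₀ S) →+ (TensorProduct ℤ N P ⧸ balancedRelR S N ρ P) :=
              (QuotientAddGroup.mk' _).comp
                (((TensorProduct.mk ℤ N P x).toAddMonoidHom).comp π)
            have hδ : ∀ w : ι →₀ S, δ w = QuotientAddGroup.mk (x ⊗ₜ[ℤ] π w) := fun w => rfl
            rw [show (fun i => (QuotientAddGroup.mk (x ⊗ₜ[ℤ] π (Finsupp.single i (σ p i))) :
                TensorProduct ℤ N P ⧸ balancedRelR S N ρ P))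
                = fun i => δ (Finsupp.single i (σ p i)) from funext fun i => (hδ _).symm]
            rw [← map_sum]
            have h2 : (∑ i ∈ (σ p).support, Finsupp.single i (σ p i)) = σ p :=
              Finsupp.sum_single (σ p)
            rw [h2, hδ, hπσ]
  -- naturality
  have hnat : ∀ t, A' (Φ t) = Finsupp.mapRange.addMonoidHom f (A t) := by
    intro t
    refine QuotientAddGroup.induction_on t ?_
    intro u
    induction u using TensorProduct.induction_on with
    | zero => simp [hA, hA']
    | tmul x p =>
      rw [hA, hα, hΦ, hA', hα']
      ext i
      simp [Finsupp.mapRange_apply, hfρ]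
    | add u v ihu ihv =>
      rw [show (QuotientAddGroup.mk (u + v) : TensorProduct ℤ N P ⧸ balancedRelR S N ρ P)
          = QuotientAddGroup.mk u + QuotientAddGroup.mk v from rfl, map_add, map_add,
        map_add, ihu, ihv, ← map_add]
  -- conclude
  rw [injective_iff_map_eq_zero]
  intro t ht
  have h1 : Finsupp.mapRange.addMonoidHom f (A t) = 0 := by
    rw [← hnat, ht, map_zero]
  have h2 : A t = 0 := by
    ext i
    have h := DFunLike.congr_fun h1 i
    simp only [Finsupp.mapRange.addMonoidHom_apply, Finsupp.mapRange_apply,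
      Finsupp.coe_zero, Pi.zero_apply] at h
    exact hf (by simpa using h)
  rw [← hβA t, h2, map_zero]
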